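/- Let μ be a compactly supported probability measure on ℝ^d and Σ a symmetric positive definite d×d matrix. Define p(x) := ∫ exp(−(1/2)(x − y)ᵀ Σ⁻¹ (x − y)) dμ(y), and for each x ∈ ℝ^d let μ_x be the probability measure with density proportional to exp(−(1/2)(x − y)ᵀ Σ⁻¹ (x − y)) with respect to μ. Then p is smooth and strictly positive, and for every x ∈ ℝ^d the gradient of its logarithm satisfies ∇ log p(x) = −Σ⁻¹ (x − E_{μ_x}[y]), where E_{μ_x}[y] = ∫ y dμ_x(y) is the mean of μ_x. -/

import Mathlib

open MeasureTheory Set Matrix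
open scoped Convolution ENNReal NNReal

noncomputable section

section Aux

variable {d : ℕ}

private lemma gm_key (A : Matrix (Fin d) (Fin d) ℝ) (hA : Aᵀ = A) (u v : Fin d → ℝ) (t : ℝ) :
    HasDerivAt (fun s : ℝ => Real.exp (-(1/2) * ((u + s • v) ⬝ᵥ (A *ᵥ (u + s • v)))))
      (-((A *ᵥ (u + t • v)) ⬝ᵥ v) * Real.exp (-(1/2) * ((u + t • v) ⬝ᵥ (A *ᵥ (u + t • v))))) t := by
  have hsymm : ∀ a b : Fin d → ℝ, a ⬝ᵥ (A *ᵥ b) = (A *ᵥ a) ⬝ᵥ b := fun a b => by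
    rw [Matrix.dotProduct_mulVec, ← Matrix.mulVec_transpose, hA]
  set a := u ⬝ᵥ (A *ᵥ u) with ha
  set b := (A *ᵥ u) ⬝ᵥ v with hb
  set c := v ⬝ᵥ (A *ᵥ v) with hc
  have expand : ∀ s : ℝ, (u + s • v) ⬝ᵥ (A *ᵥ (u + s • v)) = a + 2*s*b + s^2*c := by
    intro s
    simp only [mulVec_add, mulVec_smul, add_dotProduct, dotProduct_add, smul_dotProduct,
      dotProduct_smul, smul_eq_mul, ha, hb, hc]
    rw [hsymm u v, dotProduct_comm v (A *ᵥ u)]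
    ring
  have h1 : HasDerivAt (fun s : ℝ => a + 2*s*b + s^2*c) (2*b + 2*t*c) t := by
    have h := (((hasDerivAt_id t).const_mul 2).mul_const b).const_add a
    have h2 := (hasDerivAt_pow 2 t).mul_const c
    have := h.add h2
    simpa [pow_one, Pi.add_def] using this
  have h2 : HasDerivAt (fun s : ℝ => -(1/2) * (a + 2*s*b + s^2*c)) (-(1/2)*(2*b + 2*t*c)) t :=
    h1.const_mul _
  have h3 := h2.exp
  have hexp : (A *ᵥ (u + t • v)) ⬝ᵥ v = b + t * c := by
    simp only [mulVec_add, mulVec_smul, add_dotProduct, smul_dotProduct, smul_eq_mul, hb]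
    rw [dotProduct_comm (A *ᵥ v) v, ← hc]
  have hfun : (fun s : ℝ => Real.exp (-(1/2)*(a + 2*s*b + s^2*c)))
      = fun s => Real.exp (-(1/2)*((u + s • v) ⬝ᵥ (A *ᵥ (u + s • v)))) := by
    funext s; rw [expand s]
  rw [hfun] at h3
  convert h3 using 1
  rw [hexp, expand t]
  ring

private lemma gm_bound (A : Matrix (Fin d) (Fin d) ℝ) (w : Fin d → ℝ) (i : Fin d) :
    |(A *ᵥ w) i| ≤ (∑ j, |A i j|) * ‖w‖ := by
  rw [Finset.sum_mul]
  simp only [mulVec, dotProduct]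
  refine (Finset.abs_sum_le_sum_abs _ _).trans (Finset.sum_le_sum fun j _ => ?_)
  rw [abs_mul]
  refine mul_le_mul_of_nonneg_left ?_ (abs_nonneg _)
  simpa [Real.norm_eq_abs] using norm_le_pi_norm w j

end Aux

/-- The (unnormalized) Gaussian-mixture density `p(x) = ∫ exp(-½(x-y)ᵀΣ⁻¹(x-y)) dμ(y)`. -/
def gmP {d : ℕ} (μ : Measure (Fin d → ℝ)) (S : Matrix (Fin d) (Fin d) ℝ)
    (x : Fin d → ℝ) : ℝ :=
  ∫ y, Real.exp (-(1/2) * ((x - y) ⬝ᵥ (S⁻¹ *ᵥ (x - y)))) ∂μ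

/-- The tilted mixing measure `μ_x`, with density proportional to
`exp(-½(x-y)ᵀΣ⁻¹(x-y))` with respect to `μ`. -/
def gmTilt {d : ℕ} (μ : Measure (Fin d → ℝ)) (S : Matrix (Fin d) (Fin d) ℝ)
    (x : Fin d → ℝ) : Measure (Fin d → ℝ) :=
  ((μ.withDensity fun y =>
      ENNReal.ofReal (Real.exp (-(1/2) * ((x - y) ⬝ᵥ (S⁻¹ *ᵥ (x - y)))))) univ)⁻¹ •
    μ.withDensity fun y =>
      ENNReal.ofReal (Real.exp (-(1/2) * ((x - y) ⬝ᵥ (S⁻¹ *ᵥ (x - y)))))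

/-- **Score (Tweedie) formula for Gaussian mixtures.**  For a compactly supported mixing
probability measure `μ` and symmetric positive definite `Σ`, the mixture density
`p(x) = ∫ exp(-½(x-y)ᵀΣ⁻¹(x-y)) dμ(y)` is smooth and strictly positive, and
`∇ log p(x) = -Σ⁻¹(x - E_{μ_x}[y])`, where `μ_x` is the tilted mixing measure. -/
theorem gaussian_mixture_score
    (d : ℕ) (μ : Measure (Fin d → ℝ)) [IsProbabilityMeasure μ]
    (hsupp : ∃ K : Set (Fin d → ℝ), IsCompact K ∧ μ Kᶜ = 0)
    (S : Matrix (Fin d) (Fin d) ℝ) (hS : S.PosDef) :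
    ContDiff ℝ (⊤ : ℕ∞) (gmP μ S) ∧
    (∀ x, 0 < gmP μ S x) ∧
    (∀ (x : Fin d → ℝ) (i : Fin d),
      fderiv ℝ (fun z => Real.log (gmP μ S z)) x (Pi.single i 1) =
        -((S⁻¹ *ᵥ (x - fun j => ∫ y, y j ∂(gmTilt μ S x))) i)) := by
  obtain ⟨K, hK, hKc⟩ := hsupp
  obtain ⟨R, hR0, hKR⟩ : ∃ R, 0 ≤ R ∧ K ⊆ Metric.closedBall 0 R := by
    obtain ⟨r, hr⟩ := hK.isBounded.subset_closedBall 0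
    exact ⟨max r 0, le_max_right _ _, hr.trans (Metric.closedBall_subset_closedBall (le_max_left _ _))⟩
  set A := S⁻¹ with hAdef
  have hA : Aᵀ = A := by
    rw [hAdef, Matrix.transpose_nonsing_inv]
    congr 1
    exact (by simpa using hS.isHermitian : S.IsSymm).eq
  have hApos : A.PosDef := hS.inv
  have hQ : ∀ z, 0 ≤ z ⬝ᵥ (A *ᵥ z) := fun z => by simpa using hApos.posSemidef.dotProduct_mulVec_nonneg z
  set g : (Fin d → ℝ) → ℝ := fun z => Real.exp (-(1/2) * (z ⬝ᵥ (A *ᵥ z))) with hgdef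
  have hgP : ∀ x, gmP μ S x = ∫ y, g (x - y) ∂μ := fun x => rfl
  have hg_pos : ∀ z, 0 < g z := fun z => Real.exp_pos _
  have hg_le : ∀ z, g z ≤ 1 := fun z => by
    rw [hgdef]
    have := hQ z
    apply Real.exp_le_one_iff.mpr
    nlinarith
  have hQsmooth : ContDiff ℝ (⊤:ℕ∞) (fun z : Fin d → ℝ => z ⬝ᵥ (A *ᵥ z)) := by
    simp only [dotProduct, mulVec]
    exact ContDiff.sum fun i _ => ((ContinuousLinearMap.proj i : (Fin d → ℝ) →L[ℝ] ℝ).contDiff).mul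
      (ContDiff.sum fun j _ => contDiff_const.mul
        (ContinuousLinearMap.proj j : (Fin d → ℝ) →L[ℝ] ℝ).contDiff)
  have hg_smooth : ContDiff ℝ (⊤:ℕ∞) g := Real.contDiff_exp.comp (contDiff_const.mul hQsmooth)
  have hg_cont : Continuous g := hg_smooth.continuous
  have hae : ∀ᵐ y ∂μ, y ∈ K := by
    rw [ae_iff]
    exact hKc
  have hyR : ∀ y ∈ K, ‖y‖ ≤ R := fun y hy => by
    simpa using Metric.mem_closedBall.mp (hKR hy)
  have hint : ∀ x, Integrable (fun y => g (x - y)) μ := fun x =>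
    Integrable.mono' (integrable_const 1)
      ((hg_cont.comp (continuous_const.sub continuous_id)).aestronglyMeasurable)
      (ae_of_all _ fun y => by
        rw [Real.norm_eq_abs, abs_of_pos (hg_pos _)]
        exact hg_le _)
  have hP_pos : ∀ x, 0 < gmP μ S x := fun x => by
    rw [hgP]
    rw [integral_pos_iff_support_of_nonneg (fun y => (hg_pos _).le) (hint x)]
    have : (Function.support fun y => g (x - y)) = univ :=
      Set.eq_univ_of_forall fun y => (hg_pos _).ne'
    simp [this]
  -- smoothness
  have hsmooth : ContDiff ℝ (⊤:ℕ∞) (gmP μ S) := by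
    rw [contDiff_iff_contDiffAt]
    intro x₀
    set M := ‖x₀‖ + R + 1 with hM
    have hM0 : 0 < M := by positivity
    let φ : ContDiffBump (0 : Fin d → ℝ) := ⟨M, M+1, hM0, by linarith⟩
    have hgc_smooth : ContDiff ℝ (⊤:ℕ∞) (fun z => φ z * g z) := (φ.contDiff (n := ⊤)).mul hg_smooth
    have hgc_supp : HasCompactSupport (fun z => φ z * g z) := φ.hasCompactSupport.mul_right
    have hconv := hgc_supp.contDiff_convolution_right (ContinuousLinearMap.lsmul ℝ ℝ)
      (μ := μ) (locallyIntegrable_const (1:ℝ)) hgc_smooth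
    refine hconv.contDiffAt.congr_of_eventuallyEq ?_
    filter_upwards [Metric.ball_mem_nhds x₀ one_pos] with x hx
    rw [hgP]
    simp only [convolution, ContinuousLinearMap.lsmul_apply, one_smul]
    refine integral_congr_ae ?_
    filter_upwards [hae] with y hy
    have hxx₀ : ‖x - x₀‖ < 1 := by simpa [dist_eq_norm] using hx
    have hxy : ‖x - y - 0‖ ≤ M := by
      rw [sub_zero]
      calc ‖x - y‖ = ‖(x - x₀) + (x₀ - y)‖ := by abel_nf
        _ ≤ ‖x - x₀‖ + ‖x₀ - y‖ := norm_add_le _ _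
        _ ≤ ‖x - x₀‖ + (‖x₀‖ + ‖y‖) := by gcongr; exact norm_sub_le _ _
        _ ≤ M := by have := hyR y hy; rw [hM]; linarith
    rw [φ.one_of_mem_closedBall (Metric.mem_closedBall.mpr (by simpa [dist_eq_norm] using hxy)),
      one_mul]
  -- directional derivative of gmP
  have hPderiv : ∀ (x : Fin d → ℝ) (i : Fin d),
      fderiv ℝ (gmP μ S) x (Pi.single i 1)
        = ∫ y, -((A *ᵥ (x - y)) i) * g (x - y) ∂μ := by
    intro x i
    set v : Fin d → ℝ := Pi.single i 1 with hv
    have hvnorm : ‖v‖ ≤ 1 := by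
      rw [hv, Pi.norm_single]
      simp
    set C : ℝ := (∑ j, |A i j|) * (‖x‖ + 1 + R) with hC
    have hCnn : 0 ≤ ∑ j, |A i j| := Finset.sum_nonneg fun j _ => abs_nonneg _
    have hdp : ∀ w : Fin d → ℝ, (A *ᵥ w) ⬝ᵥ v = (A *ᵥ w) i := by
      intro w; rw [hv]; simp
    have hdiff : ∀ (y : Fin d → ℝ) (t : ℝ),
        HasDerivAt (fun s : ℝ => g (x + s • v - y))
          (-((A *ᵥ (x + t • v - y)) ⬝ᵥ v) * g (x + t • v - y)) t := by
      intro y t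
      have hxy : ∀ s : ℝ, x + s • v - y = x - y + s • v := fun s => by abel
      have h := gm_key A hA (x - y) v t
      simp only [← hxy] at h
      exact h
    have hmain := hasDerivAt_integral_of_dominated_loc_of_deriv_le (μ := μ)
      (F := fun t y => g (x + t • v - y))
      (F' := fun t y => -((A *ᵥ (x + t • v - y)) ⬝ᵥ v) * g (x + t • v - y))
      (x₀ := (0:ℝ)) (bound := fun _ => C) (Metric.ball_mem_nhds (0:ℝ) one_pos)
      (Filter.Eventually.of_forall fun t =>
        (hg_cont.comp (continuous_const.sub continuous_id) :
          Continuous fun y => g (x + t • v - y)).aestronglyMeasurable)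
      (hint _)
      (by
        apply Continuous.aestronglyMeasurable
        have hcont1 : Continuous fun y : Fin d → ℝ => (A *ᵥ (x + (0:ℝ) • v - y)) ⬝ᵥ v := by
          simp only [mulVec, dotProduct, Pi.sub_apply]
          exact continuous_finset_sum _ fun j _ => (continuous_finset_sum _ fun k _ =>
            continuous_const.mul (continuous_const.sub (continuous_apply k))).mul continuous_const
        exact (hcont1.neg.mul (hg_cont.comp (continuous_const.sub continuous_id))))
      (by
        filter_upwards [hae] with y hy t ht
        have htabs : |t| ≤ 1 := by
          have : dist t 0 < 1 := Metric.mem_ball.mp ht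
          rw [Real.dist_eq, sub_zero] at this
          linarith
        have hw : ‖x + t • v - y‖ ≤ ‖x‖ + 1 + R := by
          have h1 : ‖t • v‖ ≤ 1 := by
            rw [norm_smul, Real.norm_eq_abs]
            nlinarith [norm_nonneg v]
          calc ‖x + t • v - y‖ ≤ ‖x + t • v‖ + ‖y‖ := norm_sub_le _ _
            _ ≤ ‖x‖ + ‖t • v‖ + ‖y‖ := by gcongr; exact norm_add_le _ _
            _ ≤ ‖x‖ + 1 + R := by have := hyR y hy; linarith
        rw [Real.norm_eq_abs, abs_mul, abs_neg, abs_of_pos (hg_pos _), hdp]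
        calc |(A *ᵥ (x + t • v - y)) i| * g (x + t • v - y)
            ≤ ((∑ j, |A i j|) * ‖x + t • v - y‖) * 1 :=
              mul_le_mul (gm_bound A _ i) (hg_le _) (hg_pos _).le
                (mul_nonneg hCnn (norm_nonneg _))
          _ ≤ C := by rw [mul_one, hC]; exact mul_le_mul_of_nonneg_left hw hCnn)
      (integrable_const C)
      (ae_of_all _ fun y t _ => hdiff y t)
    -- identify with directional derivative
    have hline : HasDerivAt (fun t : ℝ => gmP μ S (x + t • v)) (fderiv ℝ (gmP μ S) x v) 0 := by
      have hd : HasFDerivAt (gmP μ S) (fderiv ℝ (gmP μ S) x) x :=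
        (hsmooth.differentiable (by simp) x).hasFDerivAt
      have hc : HasDerivAt (fun t : ℝ => x + t • v) v 0 := by
        simpa using ((hasDerivAt_id (0:ℝ)).smul_const v).const_add x
      have h0 : x + (0:ℝ) • v = x := by simp
      rw [← h0] at hd
      simpa [Function.comp_def] using hd.comp_hasDerivAt 0 hc
    have heq : (fun t : ℝ => ∫ y, g (x + t • v - y) ∂μ) = fun t : ℝ => gmP μ S (x + t • v) := by
      funext t; rw [hgP]
    rw [heq] at hmain
    have := hline.unique hmain.2
    rw [this]
    refine integral_congr_ae (ae_of_all _ fun y => ?_)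
    simp only [zero_smul, add_zero, hdp]
  -- integrability of moments
  have hmint : ∀ (x : Fin d → ℝ) (j : Fin d), Integrable (fun y => y j * g (x - y)) μ := by
    intro x j
    refine Integrable.mono' (integrable_const R)
      (((continuous_apply j).mul (hg_cont.comp (continuous_const.sub continuous_id))).aestronglyMeasurable) ?_
    filter_upwards [hae] with y hy
    rw [Real.norm_eq_abs, abs_mul, abs_of_pos (hg_pos _)]
    have h2 : |y j| ≤ R := by
      have := hyR y hy
      have h3 : |y j| ≤ ‖y‖ := by simpa [Real.norm_eq_abs] using norm_le_pi_norm y j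
      linarith
    nlinarith [hg_le (x - y), hg_pos (x - y), abs_nonneg (y j)]
  -- the mean of the tilted measure
  have htilt : ∀ (x : Fin d → ℝ) (j : Fin d),
      ∫ y, y j ∂(gmTilt μ S x) = (gmP μ S x)⁻¹ * ∫ y, y j * g (x - y) ∂μ := by
    intro x j
    rw [gmTilt]
    have hmeas : Measurable fun y => (Real.toNNReal (g (x - y))) := by
      apply Measurable.real_toNNReal
      exact (hg_cont.comp (continuous_const.sub continuous_id)).measurable
    have hZ : (μ.withDensity fun y =>
        ENNReal.ofReal (Real.exp (-(1/2) * ((x - y) ⬝ᵥ (S⁻¹ *ᵥ (x - y)))))) univ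
        = ENNReal.ofReal (gmP μ S x) := by
      rw [withDensity_apply _ MeasurableSet.univ, Measure.restrict_univ, hgP x,
        ← ofReal_integral_eq_lintegral_ofReal (hint x) (ae_of_all _ fun y => (hg_pos _).le)]
    rw [hZ, integral_smul_measure]
    have hwd : ∫ y, y j ∂(μ.withDensity fun y =>
        ENNReal.ofReal (Real.exp (-(1/2) * ((x - y) ⬝ᵥ (S⁻¹ *ᵥ (x - y)))))) 
        = ∫ y, (Real.toNNReal (g (x - y))) • (y j) ∂μ :=
      integral_withDensity_eq_integral_smul hmeas _
    rw [hwd]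
    have : ∀ y : Fin d → ℝ, (Real.toNNReal (g (x - y))) • (y j) = y j * g (x - y) := by
      intro y
      rw [NNReal.smul_def, smul_eq_mul, Real.coe_toNNReal _ (hg_pos _).le, mul_comm]
    rw [integral_congr_ae (ae_of_all _ this)]
    rw [ENNReal.toReal_inv, ENNReal.toReal_ofReal (hP_pos x).le, smul_eq_mul]
  -- conclusion
  refine ⟨hsmooth, hP_pos, fun x i => ?_⟩
  have hd : HasFDerivAt (gmP μ S) (fderiv ℝ (gmP μ S) x) x :=
    (hsmooth.differentiable (by simp) x).hasFDerivAt
  have hlog := hd.log (hP_pos x).ne'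
  rw [hlog.fderiv]
  simp only [ContinuousLinearMap.coe_smul', Pi.smul_apply, smul_eq_mul]
  rw [hPderiv x i]
  have hmrw : (fun j => ∫ y, y j ∂(gmTilt μ S x))
      = fun j => (gmP μ S x)⁻¹ * ∫ y, y j * g (x - y) ∂μ := funext (htilt x)
  rw [hmrw]
  set P : ℝ := gmP μ S x with hPdef
  set I : Fin d → ℝ := fun j => ∫ y, y j * g (x - y) ∂μ with hI
  -- split the integral
  have hintsplit : ∫ y, -((A *ᵥ (x - y)) i) * g (x - y) ∂μ
      = -((A *ᵥ x) i) * P + ∑ j, A i j * I j := by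
    have h1 : ∀ y : Fin d → ℝ, -((A *ᵥ (x - y)) i) * g (x - y)
        = -((A *ᵥ x) i) * g (x - y) + ∑ j, A i j * (y j * g (x - y)) := by
      intro y
      rw [Matrix.mulVec_sub]
      simp only [Pi.sub_apply]
      rw [show (A *ᵥ y) i = ∑ j, A i j * y j from by simp [Matrix.mulVec, dotProduct]]
      have hs : (∑ j, A i j * y j) * g (x - y) = ∑ j, A i j * (y j * g (x - y)) := by
        rw [Finset.sum_mul]
        exact Finset.sum_congr rfl fun j _ => by ring
      rw [← hs]
      ring
    rw [integral_congr_ae (ae_of_all _ h1)]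
    rw [integral_add (((hint x).const_mul _))
      (integrable_finset_sum _ fun j _ => (hmint x j).const_mul _)]
    rw [integral_finset_sum _ fun j _ => (hmint x j).const_mul _]
    rw [integral_const_mul, ← hgP x, ← hPdef]
    congr 1
    exact Finset.sum_congr rfl fun j _ => by rw [integral_const_mul]
  rw [hintsplit]
  have hAm : (A *ᵥ (x - fun j => P⁻¹ * I j)) i = (A *ᵥ x) i - ∑ j, A i j * (P⁻¹ * I j) := by
    rw [Matrix.mulVec_sub]
    simp [Matrix.mulVec, dotProduct]
  rw [hAm]
  have hPinv : P⁻¹ * P = 1 := inv_mul_cancel₀ (hP_pos x).ne'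
  calc P⁻¹ * (-((A *ᵥ x) i) * P + ∑ j, A i j * I j)
      = -((A *ᵥ x) i) * (P⁻¹ * P) + ∑ j, A i j * (P⁻¹ * I j) := by
        rw [mul_add, Finset.mul_sum]
        congr 1
        · ring
        · exact Finset.sum_congr rfl fun j _ => by ring
    _ = -((A *ᵥ x) i) + ∑ j, A i j * (P⁻¹ * I j) := by rw [hPinv, mul_one]
    _ = -((A *ᵥ x) i - ∑ j, A i j * (P⁻¹ * I j)) := by ring
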